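/- Let R = {[l_x, r_x] : x ∈ X} be a natural (nonnegative-integer endpoint) interval representation of an interval order P (meaning x < y iff r_x + 1 ≤ l_y), and let i < j be integers such that no interval endpoint lies strictly between i and j, and i is not the right endpoint of any interval. Then the family obtained by replacing every endpoint q ≥ j by q − (j − i) (leaving endpoints ≤ i unchanged) is again an interval representation of P, it has fewer distinct endpoints, and no interval length increases. -/

import Mathlib

/-- Collapsing a gap `[i,j]` (with `i` not a right endpoint) of a natural representation
yields a representation of the same interval order with strictly fewer distinct
endpoints, with no interval length increasing. -/
theorem stmt_3 {α : Type*} [Fintype α] [PartialOrder α] (l r : α → ℕ)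
    (hlr : ∀ x, l x ≤ r x) (hrep : ∀ x y : α, x < y ↔ r x + 1 ≤ l y)
    (i j : ℕ) (hij : i < j)
    (hi_ep : ∃ x, l x = i ∨ r x = i)
    (hj_ep : ∃ x, l x = j ∨ r x = j)
    (hgap : ∀ x, ¬(i < l x ∧ l x < j) ∧ ¬(i < r x ∧ r x < j))
    (hi_not_right : ∀ x, r x ≠ i)
    (l' r' : α → ℕ)
    (hl' : ∀ x, l' x = if j ≤ l x then l x - (j - i) else l x)
    (hr' : ∀ x, r' x = if j ≤ r x then r x - (j - i) else r x) :
    (∀ x, l' x ≤ r' x) ∧ (∀ x y : α, x < y ↔ r' x + 1 ≤ l' y) ∧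
    (Set.range l' ∪ Set.range r').ncard < (Set.range l ∪ Set.range r).ncard ∧
    (∀ x, r' x - l' x ≤ r x - l x) := by
  have key : ∀ x, (l x ≤ i ∨ j ≤ l x) ∧ (r x < i ∨ j ≤ r x) := by
    intro x
    have h1 := hgap x
    have h2 := hi_not_right x
    omega
  refine ⟨?_, ?_, ?_, ?_⟩
  · intro x
    have := key x
    have := hlr x
    rw [hl', hr']
    split_ifs <;> omega
  · intro x y
    rw [hrep, hl', hr']
    have h1 := (key x).2
    have h2 := (key y).1
    split_ifs <;> omega
  · set f : ℕ → ℕ := fun q => if j ≤ q then q - (j - i) else q with hf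
    have hS : Set.range l' ∪ Set.range r' = f '' (Set.range l ∪ Set.range r) := by
      ext q
      simp only [Set.mem_union, Set.mem_range, Set.mem_image]
      constructor
      · rintro (⟨x, rfl⟩ | ⟨x, rfl⟩)
        · exact ⟨l x, Or.inl ⟨x, rfl⟩, (hl' x).symm⟩
        · exact ⟨r x, Or.inr ⟨x, rfl⟩, (hr' x).symm⟩
      · rintro ⟨q, (⟨x, rfl⟩ | ⟨x, rfl⟩), rfl⟩
        · exact Or.inl ⟨x, hl' x⟩
        · exact Or.inr ⟨x, hr' x⟩
    have hfin : (Set.range l ∪ Set.range r).Finite :=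
      (Set.finite_range l).union (Set.finite_range r)
    obtain ⟨xi, hxi⟩ := hi_ep
    have hiS : i ∈ Set.range l ∪ Set.range r := by
      rcases hxi with h | h
      · exact Or.inl ⟨xi, h⟩
      · exact absurd h (hi_not_right xi)
    obtain ⟨xj, hxj⟩ := hj_ep
    have hjS : j ∈ Set.range l ∪ Set.range r := by
      rcases hxj with h | h
      · exact Or.inl ⟨xj, h⟩
      · exact Or.inr ⟨xj, h⟩
    have himg : f '' (Set.range l ∪ Set.range r)
        = f '' ((Set.range l ∪ Set.range r) \ {j}) := by
      apply subset_antisymm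
      · rintro q ⟨p, hp, rfl⟩
        by_cases hpj : p = j
        · subst hpj
          refine ⟨i, ⟨hiS, by simp; omega⟩, ?_⟩
          simp only [hf]
          rw [if_neg (by omega), if_pos le_rfl]
          omega
        · exact ⟨p, ⟨hp, hpj⟩, rfl⟩
      · exact Set.image_mono Set.diff_subset
    rw [hS, himg]
    calc (f '' ((Set.range l ∪ Set.range r) \ {j})).ncard
        ≤ ((Set.range l ∪ Set.range r) \ {j}).ncard :=
          Set.ncard_image_le hfin.diff
      _ < (Set.range l ∪ Set.range r).ncard :=
          Set.ncard_diff_singleton_lt_of_mem hjS hfin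
  · intro x
    have := key x
    have := hlr x
    rw [hl', hr']
    split_ifs <;> omega
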